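/- For n ≥ 3, the independence systems S_{4n} and S'_{4n} are matroids. -/

import Mathlib

open Finset

/-- A matroid on a finite ground set, given by its independent sets
satisfying the axioms (I1)-(I3). -/
structure FinMatroid (α : Type*) [DecidableEq α] where
  E : Finset α
  Indep : Finset α → Prop
  indep_empty : Indep ∅
  subset_ground : ∀ ⦃I⦄, Indep I → I ⊆ E
  indep_subset : ∀ ⦃I J⦄, Indep I → J ⊆ I → Indep J
  indep_aug : ∀ ⦃I J⦄, Indep I → Indep J → I.card < J.card →
    ∃ e ∈ J, e ∉ I ∧ Indep (insert e I)

namespace FinMatroid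

variable {α : Type*} [DecidableEq α]

/-- A base is a maximal independent set. -/
def Base (M : FinMatroid α) (B : Finset α) : Prop :=
  M.Indep B ∧ ∀ ⦃I⦄, M.Indep I → B ⊆ I → I = B

/-- A circuit is a minimal dependent subset of the ground set. -/
def Circuit (M : FinMatroid α) (C : Finset α) : Prop :=
  C ⊆ M.E ∧ ¬ M.Indep C ∧ ∀ ⦃D⦄, D ⊂ C → M.Indep D

/-- The rank of a set: the largest cardinality of an independent subset. -/
noncomputable def rank (M : FinMatroid α) (A : Finset α) : ℕ := by
  classical exact (A.powerset.filter M.Indep).sup Finset.card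

/-- The Tutte polynomial of a matroid, evaluated at `x`, `y`. -/
noncomputable def tutte {R : Type*} [CommRing R] (M : FinMatroid α) (x y : R) : R :=
  ∑ A ∈ M.E.powerset,
    (x - 1) ^ (M.rank M.E - M.rank A) * (y - 1) ^ (A.card - M.rank A)

end FinMatroid

/-- The circuital loose cycle `F₁` on `Z_{4n}`. -/
def memF1 (n : ℕ) (C : Finset (ZMod (4 * n))) : Prop :=
  (∃ i : ℕ, i ≤ n - 2 ∧
      C = {((2 * i : ℕ) : ZMod (4 * n)), ((2 * i + 1 : ℕ) : ZMod (4 * n)),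
           ((2 * i + 2 : ℕ) : ZMod (4 * n))}) ∨
    C = {((2 * n - 2 : ℕ) : ZMod (4 * n)), ((2 * n - 1 : ℕ) : ZMod (4 * n)), 0}

/-- The circuital loose cycle `F₂` on `Z_{4n}`. -/
def memF2 (n : ℕ) (C : Finset (ZMod (4 * n))) : Prop :=
  (∃ i : ℕ, n ≤ i ∧ i ≤ 2 * n - 2 ∧
      C = {((2 * i : ℕ) : ZMod (4 * n)), ((2 * i + 1 : ℕ) : ZMod (4 * n)),
           ((2 * i + 2 : ℕ) : ZMod (4 * n))}) ∨
    C = {((4 * n - 2 : ℕ) : ZMod (4 * n)), ((4 * n - 1 : ℕ) : ZMod (4 * n)),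
         ((2 * n : ℕ) : ZMod (4 * n))}

/-- The circuital loose path `F₃` on `Z_{4n}`. -/
def memF3 (n : ℕ) (C : Finset (ZMod (4 * n))) : Prop :=
  ∃ i : ℕ, i ≤ n - 1 ∧
    C = {((2 * i : ℕ) : ZMod (4 * n)), ((2 * i + 1 : ℕ) : ZMod (4 * n)),
         ((2 * i + 2 : ℕ) : ZMod (4 * n))}

/-- The circuital loose path `F₄` on `Z_{4n}`. -/
def memF4 (n : ℕ) (C : Finset (ZMod (4 * n))) : Prop :=
  ∃ i : ℕ, n ≤ i ∧ i ≤ 2 * n - 1 ∧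
    C = {((2 * i : ℕ) : ZMod (4 * n)), ((2 * i + 1 : ℕ) : ZMod (4 * n)),
         ((2 * i + 2 : ℕ) : ZMod (4 * n))}

/-- Independence in `S_{4n}`: subsets of size at most `2`, and `3`-sets that are
not removed triples. -/
def IndepS (n : ℕ) (I : Finset (ZMod (4 * n))) : Prop :=
  I.card ≤ 2 ∨ (I.card = 3 ∧ ¬ memF1 n I ∧ ¬ memF2 n I)

/-- Independence in `S'_{4n}`. -/
def IndepS' (n : ℕ) (I : Finset (ZMod (4 * n))) : Prop :=
  I.card ≤ 2 ∨ (I.card = 3 ∧ ¬ memF3 n I ∧ ¬ memF4 n I)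

section MyAux

variable {m : ℕ}

lemma mem3' [NeZero m] {a b c : ℕ} {x : ZMod m}
    (hx : x ∈ ({(a : ZMod m), (b : ZMod m), (c : ZMod m)} : Finset (ZMod m))) :
    x.val = a % m ∨ x.val = b % m ∨ x.val = c % m := by
  simp only [Finset.mem_insert, Finset.mem_singleton] at hx
  rcases hx with rfl | rfl | rfl
  · exact Or.inl (ZMod.val_natCast m a)
  · exact Or.inr (Or.inl (ZMod.val_natCast m b))
  · exact Or.inr (Or.inr (ZMod.val_natCast m c))

lemma mem3z [NeZero m] {a b : ℕ} {x : ZMod m}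
    (hx : x ∈ ({(a : ZMod m), (b : ZMod m), (0 : ZMod m)} : Finset (ZMod m))) :
    x.val = a % m ∨ x.val = b % m ∨ x.val = 0 := by
  simp only [Finset.mem_insert, Finset.mem_singleton] at hx
  rcases hx with rfl | rfl | rfl
  · exact Or.inl (ZMod.val_natCast m a)
  · exact Or.inr (Or.inl (ZMod.val_natCast m b))
  · exact Or.inr (Or.inr ZMod.val_zero)

end MyAux

/-- Generic construction of a matroid from a family of forbidden triples in which
any two distinct forbidden sets meet in at most one element. -/
def mkM {α : Type*} [DecidableEq α] [Fintype α] (F : Finset α → Prop)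
    (hF : ∀ T T', F T → F T' → T ≠ T' → (T ∩ T').card ≤ 1) : FinMatroid α where
  E := Finset.univ
  Indep I := I.card ≤ 2 ∨ (I.card = 3 ∧ ¬ F I)
  indep_empty := Or.inl (by simp)
  subset_ground := fun I _ => I.subset_univ
  indep_subset := by
    intro I J hI hJI
    have hle := Finset.card_le_card hJI
    rcases Nat.lt_or_ge J.card 3 with h | h
    · exact Or.inl (by omega)
    · have hI3 : I.card ≤ 3 := by rcases hI with h' | h' <;> omega
      have : J = I := Finset.eq_of_subset_of_card_le hJI (by omega)
      subst this; exact hI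
  indep_aug := by
    intro I J hI hJ hlt
    have hJ3 : J.card ≤ 3 := by rcases hJ with h | h <;> omega
    have hI2 : I.card ≤ 2 := by omega
    have hex : ∃ e ∈ J, e ∉ I := by
      by_contra h
      push_neg at h
      exact absurd (Finset.card_le_card h) (by omega)
    by_cases h1 : I.card ≤ 1
    · obtain ⟨e, heJ, heI⟩ := hex
      exact ⟨e, heJ, heI, Or.inl (by rw [Finset.card_insert_of_notMem heI]; omega)⟩
    · have hI2' : I.card = 2 := by omega
      have hJc : J.card = 3 := by omega
      by_cases hsub : I ⊆ J
      · obtain ⟨e, heJ, heI⟩ := hex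
        refine ⟨e, heJ, heI, ?_⟩
        have hins : insert e I = J := by
          apply Finset.eq_of_subset_of_card_le (Finset.insert_subset heJ hsub)
          rw [Finset.card_insert_of_notMem heI]; omega
        rw [hins]; exact hJ
      · have hinter : (I ∩ J).card ≤ 1 := by
          have hss : I ∩ J ⊂ I :=
            HasSubset.Subset.ssubset_of_ne Finset.inter_subset_left
              (fun h => hsub (Finset.inter_eq_left.mp h))
          have := Finset.card_lt_card hss
          omega
        have hsd : 1 < (J \ I).card := by
          have h2 := Finset.card_sdiff_add_card_inter J I
          rw [Finset.inter_comm] at h2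
          omega
        obtain ⟨e, he, e', he', hee⟩ := Finset.one_lt_card.mp hsd
        rw [Finset.mem_sdiff] at he he'
        have hcard : ∀ a : α, a ∉ I → (insert a I).card = 3 := fun a ha => by
          rw [Finset.card_insert_of_notMem ha]; omega
        by_cases hfe : F (insert e I)
        · refine ⟨e', he'.1, he'.2, Or.inr ⟨hcard e' he'.2, fun hfe' => ?_⟩⟩
          have hne : insert e I ≠ insert e' I := by
            intro h
            have : e ∈ insert e' I := h ▸ Finset.mem_insert_self e I
            rcases Finset.mem_insert.mp this with h' | h'
            · exact hee h'
            · exact he.2 h'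
          have hle := hF _ _ hfe hfe' hne
          have hsub2 : I ⊆ insert e I ∩ insert e' I :=
            Finset.subset_inter (Finset.subset_insert _ _) (Finset.subset_insert _ _)
          have := Finset.card_le_card hsub2
          omega
        · exact ⟨e, he.1, he.2, Or.inr ⟨hcard e he.2, hfe⟩⟩

/-- Parameterised triples for the family `F₁ ∪ F₂`. -/
def tripA (n k : ℕ) : Finset (ZMod (4 * n)) :=
  if k = 2 * n - 1 then
    {((2 * n - 2 : ℕ) : ZMod (4 * n)), ((2 * n - 1 : ℕ) : ZMod (4 * n)), 0}
  else if k = 4 * n then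
    {((4 * n - 2 : ℕ) : ZMod (4 * n)), ((4 * n - 1 : ℕ) : ZMod (4 * n)),
     ((2 * n : ℕ) : ZMod (4 * n))}
  else
    {((2 * k : ℕ) : ZMod (4 * n)), ((2 * k + 1 : ℕ) : ZMod (4 * n)),
     ((2 * k + 2 : ℕ) : ZMod (4 * n))}

def QA (n k u : ℕ) : Prop :=
  ((k ≤ n - 2 ∨ (n ≤ k ∧ k ≤ 2 * n - 2)) ∧ (u = 2 * k ∨ u = 2 * k + 1 ∨ u = 2 * k + 2)) ∨
  (k = 2 * n - 1 ∧ (u = 2 * n - 2 ∨ u = 2 * n - 1 ∨ u = 0)) ∨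
  (k = 4 * n ∧ (u = 4 * n - 2 ∨ u = 4 * n - 1 ∨ u = 2 * n))

lemma descA {n : ℕ} (hn : 3 ≤ n) [NeZero (4 * n)] {T : Finset (ZMod (4 * n))}
    (hT : memF1 n T ∨ memF2 n T) :
    ∃ k, T = tripA n k ∧ ∀ x ∈ T, QA n k x.val := by
  rcases hT with (⟨i, hi, rfl⟩ | rfl) | (⟨i, hi1, hi2, rfl⟩ | rfl)
  · refine ⟨i, ?_, ?_⟩
    · rw [tripA, if_neg (by omega), if_neg (by omega)]
    · intro x hx
      have h := mem3' hx
      have m1 : (2 * i) % (4 * n) = 2 * i := Nat.mod_eq_of_lt (by omega)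
      have m2 : (2 * i + 1) % (4 * n) = 2 * i + 1 := Nat.mod_eq_of_lt (by omega)
      have m3 : (2 * i + 2) % (4 * n) = 2 * i + 2 := Nat.mod_eq_of_lt (by omega)
      unfold QA; omega
  · refine ⟨2 * n - 1, ?_, ?_⟩
    · rw [tripA, if_pos rfl]
    · intro x hx
      have h := mem3z hx
      have m1 : (2 * n - 2) % (4 * n) = 2 * n - 2 := Nat.mod_eq_of_lt (by omega)
      have m2 : (2 * n - 1) % (4 * n) = 2 * n - 1 := Nat.mod_eq_of_lt (by omega)
      unfold QA; omega
  · refine ⟨i, ?_, ?_⟩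
    · rw [tripA, if_neg (by omega), if_neg (by omega)]
    · intro x hx
      have h := mem3' hx
      have m1 : (2 * i) % (4 * n) = 2 * i := Nat.mod_eq_of_lt (by omega)
      have m2 : (2 * i + 1) % (4 * n) = 2 * i + 1 := Nat.mod_eq_of_lt (by omega)
      have m3 : (2 * i + 2) % (4 * n) = 2 * i + 2 := Nat.mod_eq_of_lt (by omega)
      unfold QA; omega
  · refine ⟨4 * n, ?_, ?_⟩
    · rw [tripA, if_neg (by omega), if_pos rfl]
    · intro x hx
      have h := mem3' hx
      have m1 : (4 * n - 2) % (4 * n) = 4 * n - 2 := Nat.mod_eq_of_lt (by omega)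
      have m2 : (4 * n - 1) % (4 * n) = 4 * n - 1 := Nat.mod_eq_of_lt (by omega)
      have m3 : (2 * n) % (4 * n) = 2 * n := Nat.mod_eq_of_lt (by omega)
      unfold QA; omega

lemma interA {n : ℕ} (hn : 3 ≤ n) [NeZero (4 * n)] {T T' : Finset (ZMod (4 * n))}
    (hT : memF1 n T ∨ memF2 n T) (hT' : memF1 n T' ∨ memF2 n T')
    (hne : T ≠ T') : (T ∩ T').card ≤ 1 := by
  obtain ⟨k, hk, hQ⟩ := descA hn hT
  obtain ⟨k', hk', hQ'⟩ := descA hn hT'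
  have hkk : k ≠ k' := by rintro rfl; exact hne (hk.trans hk'.symm)
  rw [Finset.card_le_one]
  intro x hx y hy
  rw [Finset.mem_inter] at hx hy
  have q1 := hQ x hx.1
  have q2 := hQ' x hx.2
  have q3 := hQ y hy.1
  have q4 := hQ' y hy.2
  apply ZMod.val_injective (4 * n)
  unfold QA at q1 q2 q3 q4
  omega

/-- Parameterised triples for the family `F₃ ∪ F₄`. -/
def tripB (n k : ℕ) : Finset (ZMod (4 * n)) :=
  if k = 2 * n - 1 then
    {((4 * n - 2 : ℕ) : ZMod (4 * n)), ((4 * n - 1 : ℕ) : ZMod (4 * n)),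
     ((4 * n : ℕ) : ZMod (4 * n))}
  else
    {((2 * k : ℕ) : ZMod (4 * n)), ((2 * k + 1 : ℕ) : ZMod (4 * n)),
     ((2 * k + 2 : ℕ) : ZMod (4 * n))}

def QB (n k u : ℕ) : Prop :=
  ((k ≤ n - 1 ∨ (n ≤ k ∧ k ≤ 2 * n - 2)) ∧ (u = 2 * k ∨ u = 2 * k + 1 ∨ u = 2 * k + 2)) ∨
  (k = 2 * n - 1 ∧ (u = 4 * n - 2 ∨ u = 4 * n - 1 ∨ u = 0))

lemma descB {n : ℕ} (hn : 3 ≤ n) [NeZero (4 * n)] {T : Finset (ZMod (4 * n))}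
    (hT : memF3 n T ∨ memF4 n T) :
    ∃ k, T = tripB n k ∧ ∀ x ∈ T, QB n k x.val := by
  rcases hT with ⟨i, hi, rfl⟩ | ⟨i, hi1, hi2, rfl⟩
  · refine ⟨i, ?_, ?_⟩
    · rw [tripB, if_neg (by omega)]
    · intro x hx
      have h := mem3' hx
      have m1 : (2 * i) % (4 * n) = 2 * i := Nat.mod_eq_of_lt (by omega)
      have m2 : (2 * i + 1) % (4 * n) = 2 * i + 1 := Nat.mod_eq_of_lt (by omega)
      have m3 : (2 * i + 2) % (4 * n) = 2 * i + 2 := Nat.mod_eq_of_lt (by omega)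
      unfold QB; omega
  · rcases Nat.lt_or_ge i (2 * n - 1) with hlt | hge
    · refine ⟨i, ?_, ?_⟩
      · rw [tripB, if_neg (by omega)]
      · intro x hx
        have h := mem3' hx
        have m1 : (2 * i) % (4 * n) = 2 * i := Nat.mod_eq_of_lt (by omega)
        have m2 : (2 * i + 1) % (4 * n) = 2 * i + 1 := Nat.mod_eq_of_lt (by omega)
        have m3 : (2 * i + 2) % (4 * n) = 2 * i + 2 := Nat.mod_eq_of_lt (by omega)
        unfold QB; omega
    · have hieq : i = 2 * n - 1 := by omega
      refine ⟨2 * n - 1, ?_, ?_⟩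
      · rw [tripB, if_pos rfl]
        rw [show 2 * i + 2 = 4 * n by omega, show 2 * i + 1 = 4 * n - 1 by omega,
            show 2 * i = 4 * n - 2 by omega]
      · intro x hx
        have h := mem3' hx
        have m1 : (2 * i) % (4 * n) = 4 * n - 2 := by
          rw [show 2 * i = 4 * n - 2 by omega]; exact Nat.mod_eq_of_lt (by omega)
        have m2 : (2 * i + 1) % (4 * n) = 4 * n - 1 := by
          rw [show 2 * i + 1 = 4 * n - 1 by omega]; exact Nat.mod_eq_of_lt (by omega)
        have m3 : (2 * i + 2) % (4 * n) = 0 := by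
          rw [show 2 * i + 2 = 4 * n by omega]; exact Nat.mod_self _
        unfold QB; omega

lemma interB {n : ℕ} (hn : 3 ≤ n) [NeZero (4 * n)] {T T' : Finset (ZMod (4 * n))}
    (hT : memF3 n T ∨ memF4 n T) (hT' : memF3 n T' ∨ memF4 n T')
    (hne : T ≠ T') : (T ∩ T').card ≤ 1 := by
  obtain ⟨k, hk, hQ⟩ := descB hn hT
  obtain ⟨k', hk', hQ'⟩ := descB hn hT'
  have hkk : k ≠ k' := by rintro rfl; exact hne (hk.trans hk'.symm)
  rw [Finset.card_le_one]
  intro x hx y hy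
  rw [Finset.mem_inter] at hx hy
  have q1 := hQ x hx.1
  have q2 := hQ' x hx.2
  have q3 := hQ y hy.1
  have q4 := hQ' y hy.2
  apply ZMod.val_injective (4 * n)
  unfold QB at q1 q2 q3 q4
  omega

/-- For `n ≥ 3`, the independence systems `S_{4n}` and `S'_{4n}` are matroids. -/
theorem stmt14 (n : ℕ) (hn : 3 ≤ n) :
    (∃ M : FinMatroid (ZMod (4 * n)), (∀ a : ZMod (4 * n), a ∈ M.E) ∧
      ∀ I, M.Indep I ↔ IndepS n I) ∧
    (∃ M : FinMatroid (ZMod (4 * n)), (∀ a : ZMod (4 * n), a ∈ M.E) ∧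
      ∀ I, M.Indep I ↔ IndepS' n I) := by
  haveI : NeZero (4 * n) := ⟨by omega⟩
  constructor
  · refine ⟨mkM (fun T => memF1 n T ∨ memF2 n T)
      (fun T T' h h' hne => interA hn h h' hne), fun a => Finset.mem_univ a, fun I => ?_⟩
    show I.card ≤ 2 ∨ (I.card = 3 ∧ ¬ (memF1 n I ∨ memF2 n I)) ↔ IndepS n I
    unfold IndepS
    tauto
  · refine ⟨mkM (fun T => memF3 n T ∨ memF4 n T)
      (fun T T' h h' hne => interB hn h h' hne), fun a => Finset.mem_univ a, fun I => ?_⟩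
    show I.card ≤ 2 ∨ (I.card = 3 ∧ ¬ (memF3 n I ∨ memF4 n I)) ↔ IndepS' n I
    unfold IndepS'
    tauto
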